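/- For any finite sequence of action symbols a1, a2, ..., an (n ≥ 0) and any EPDL formula φ, the formula K⦗a1⦘⦗a2⦘···⦗an⦘φ ↔ ⟨?K⟨a1⟩⊤; a1; ...; ?K⟨an⟩⊤; an⟩Kφ is valid on uncertainty maps, where ⦗a⦘φ abbreviates [a]φ ∧ ⟨a⟩φ. -/
import Mathlib


mutual
/-- Formulas of EPDL. -/
inductive EForm (P A : Type) : Type
  | top : EForm P A
  | atom : P → EForm P A
  | neg : EForm P A → EForm P A
  | and : EForm P A → EForm P A → EForm P A
  | box : EProg P A → EForm P A → EForm P A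
  | know : EForm P A → EForm P A
/-- Programs of EPDL. -/
inductive EProg (P A : Type) : Type
  | act : A → EProg P A
  | test : EForm P A → EProg P A
  | seq : EProg P A → EProg P A → EProg P A
  | choice : EProg P A → EProg P A → EProg P A
  | star : EProg P A → EProg P A
end

namespace EForm
variable {P A : Type}
/-- φ ∨ ψ := ¬(¬φ ∧ ¬ψ) -/
def or (φ ψ : EForm P A) : EForm P A := neg (and (neg φ) (neg ψ))
/-- φ → ψ := ¬φ ∨ ψ -/
def imp (φ ψ : EForm P A) : EForm P A := or (neg φ) ψ
def iff (φ ψ : EForm P A) : EForm P A := and (imp φ ψ) (imp ψ φ)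
/-- ⟨π⟩φ := ¬[π]¬φ -/
def dia (π : EProg P A) (φ : EForm P A) : EForm P A := neg (box π (neg φ))
/-- ⦗π⦘φ := [π]φ ∧ ⟨π⟩φ -/
def bbox (π : EProg P A) (φ : EForm P A) : EForm P A := and (box π φ) (dia π φ)
/-- K̂φ := ¬K¬φ -/
def hatK (φ : EForm P A) : EForm P A := neg (know (neg φ))
end EForm

/-- A Kripke model with labelled relations. -/
structure Kripke (P A : Type) where
  S : Type
  R : A → S → S → Prop
  V : S → P → Prop

namespace Kripke
variable {P A : Type}
/-- U|^a -/
def img (N : Kripke P A) (a : A) (U : Set N.S) : Set N.S := {t | ∃ u ∈ U, N.R a u t}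
/-- Iterated update U|^σ along a sequence of actions. -/
def updU (N : Kripke P A) : Set N.S → List A → Set N.S
  | U, [] => U
  | U, a :: σ => N.updU (N.img a U) σ
end Kripke

mutual
/-- Truth of an EPDL formula at a pointed uncertainty map, represented by the
(fixed) Kripke model `N`, an uncertainty set `U` and a state `s`. -/
def eSat {P A : Type} (N : Kripke P A) : Set N.S → N.S → EForm P A → Prop
  | _, _, .top => True
  | _, s, .atom p => N.V s p
  | U, s, .neg φ => ¬ eSat N U s φ
  | U, s, .and φ ψ => eSat N U s φ ∧ eSat N U s ψ
  | U, s, .box π φ => ∀ c : Set N.S × N.S, eRel N π (U, s) c → eSat N c.1 c.2 φ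
  | U, _, .know φ => ∀ u ∈ U, eSat N U u φ
/-- The relation ⟦π⟧ between pointed uncertainty maps (over a fixed Kripke model
`N`, a pointed uncertainty map is a pair of an uncertainty set and a state). -/
def eRel {P A : Type} (N : Kripke P A) : EProg P A → Set N.S × N.S → Set N.S × N.S → Prop
  | .act a, c, c' => c'.1 = N.img a c.1 ∧ N.R a c.2 c'.2
  | .test ψ, c, c' => c' = c ∧ eSat N c.1 c.2 ψ
  | .seq π₁ π₂, c, c' => ∃ d, eRel N π₁ c d ∧ eRel N π₂ d c'
  | .choice π₁ π₂, c, c' => eRel N π₁ c c' ∨ eRel N π₂ c c'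
  | .star π, c, c' => Relation.ReflTransGen (fun x y => eRel N π x y) c c'
end

/-- Validity: truth at every pointed uncertainty map. -/
def eValid {P A : Type} (φ : EForm P A) : Prop :=
  ∀ (N : Kripke P A) (U : Set N.S), U.Nonempty → ∀ s ∈ U, eSat N U s φ

/-- ⦗a1⦘⦗a2⦘···⦗an⦘φ -/
def bchain {P A : Type} : List A → EForm P A → EForm P A
  | [], φ => φ
  | a :: as, φ => EForm.bbox (EProg.act a) (bchain as φ)

/-- The guarded action ?K⟨a⟩⊤; a. -/
def guardA {P A : Type} (a : A) : EProg P A :=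
  EProg.seq (EProg.test (EForm.know (EForm.dia (EProg.act a) EForm.top))) (EProg.act a)

/-- The program ?K⟨a1⟩⊤; a1; ...; ?K⟨an⟩⊤; an for a nonempty sequence a1...an. -/
def guardSeq {P A : Type} : A → List A → EProg P A
  | a, [] => guardA a
  | a, b :: bs => EProg.seq (guardA a) (guardSeq b bs)

/-- The formula ⟨?K⟨a1⟩⊤; a1; ...; ?K⟨an⟩⊤; an⟩Kφ (which is Kφ when n = 0). -/
def guardedDia {P A : Type} : List A → EForm P A → EForm P A
  | [], φ => EForm.know φ
  | a :: as, φ => EForm.dia (guardSeq a as) (EForm.know φ)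

/-- Σ_{a∈B}(?K⟨a⟩⊤; a), the sum of the guarded actions over a finite set B
(given as a list); for empty B it is the program ?⊥ with empty interpretation. -/
def sumGuard {P A : Type} : List A → EProg P A
  | [] => EProg.test (EForm.neg EForm.top)
  | [a] => guardA a
  | a :: b :: bs => EProg.choice (guardA a) (sumGuard (b :: bs))

section helpers
variable {P A : Type} {N : Kripke P A}

lemma sat_Kdia (a : A) (U : Set N.S) (s : N.S) :
    eSat N U s (EForm.know (EForm.dia (EProg.act a) EForm.top)) ↔ ∀ u ∈ U, ∃ t, N.R a u t := by
  simp only [eSat, EForm.dia, eRel]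
  constructor
  · intro h u hu
    have := h u hu
    push_neg at this
    obtain ⟨c, ⟨h1, h2⟩, -⟩ := this
    exact ⟨c.2, h2⟩
  · intro h u hu hbox
    obtain ⟨t, ht⟩ := h u hu
    exact hbox (N.img a U, t) ⟨rfl, ht⟩ (by simp [eSat])

lemma eRel_guardA {a : A} {c d : Set N.S × N.S} :
    eRel N (guardA a) c d ↔
      (∀ u ∈ c.1, ∃ t, N.R a u t) ∧ d.1 = N.img a c.1 ∧ N.R a c.2 d.2 := by
  show (∃ e, eRel N (EProg.test _) c e ∧ eRel N (EProg.act a) e d) ↔ _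
  simp only [eRel]
  constructor
  · rintro ⟨e, ⟨he, hK⟩, h1, h2⟩
    rw [he] at h1 h2
    exact ⟨(sat_Kdia a c.1 c.2).1 hK, h1, h2⟩
  · rintro ⟨hK, h1, h2⟩
    exact ⟨c, ⟨rfl, (sat_Kdia a c.1 c.2).2 hK⟩, h1, h2⟩

lemma sat_dia {π : EProg P A} {χ : EForm P A} {U : Set N.S} {s : N.S} :
    eSat N U s (EForm.dia π χ) ↔ ∃ c, eRel N π (U, s) c ∧ eSat N c.1 c.2 χ := by
  simp only [EForm.dia, eSat]
  push_neg
  tauto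

lemma guardedDia_cons {a : A} {as : List A} {φ : EForm P A} {U : Set N.S} {s : N.S} :
    eSat N U s (guardedDia (a :: as) φ) ↔
      ∃ d, eRel N (guardA a) (U, s) d ∧ eSat N d.1 d.2 (guardedDia as φ) := by
  cases as with
  | nil =>
    show eSat N U s (EForm.dia (guardA a) (EForm.know φ)) ↔ _
    exact sat_dia
  | cons b bs =>
    show eSat N U s (EForm.dia (EProg.seq (guardA a) (guardSeq b bs)) (EForm.know φ)) ↔ _
    rw [sat_dia]
    constructor
    · rintro ⟨c, ⟨d, h1, h2⟩, h3⟩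
      exact ⟨d, h1, (show eSat N d.1 d.2 (EForm.dia (guardSeq b bs) (EForm.know φ)) from
        sat_dia.2 ⟨c, by rwa [Prod.mk.eta], h3⟩)⟩
    · rintro ⟨d, h1, h2⟩
      obtain ⟨c, h2, h3⟩ := sat_dia.1 h2
      exact ⟨c, ⟨d, h1, by rwa [Prod.mk.eta] at h2⟩, h3⟩

lemma main_iff {φ : EForm P A} : ∀ (as : List A) (U : Set N.S), U.Nonempty → ∀ s ∈ U,
    ((∀ u ∈ U, eSat N U u (bchain as φ)) ↔ eSat N U s (guardedDia as φ)) := by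
  intro as
  induction as with
  | nil =>
    intro U hU s hs
    show _ ↔ eSat N U s (EForm.know φ)
    simp only [eSat, bchain]
  | cons a rest ih =>
    intro U hU s hs
    rw [guardedDia_cons]
    constructor
    · intro h
      -- extract box and dia parts
      have hbox : ∀ u ∈ U, ∀ c : Set N.S × N.S,
          eRel N (EProg.act a) (U, u) c → eSat N c.1 c.2 (bchain rest φ) := by
        intro u hu
        exact (show eSat N U u (EForm.and _ _) from h u hu).1
      have hdia : ∀ u ∈ U, ∃ t, N.R a u t := by
        intro u hu
        have := sat_dia.1 (show eSat N U u (EForm.and _ _) from h u hu).2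
        obtain ⟨c, ⟨-, hr⟩, -⟩ := this
        exact ⟨c.2, hr⟩
      obtain ⟨t₀, ht₀⟩ := hdia s hs
      have ht₀' : t₀ ∈ N.img a U := ⟨s, hs, ht₀⟩
      have hall : ∀ u ∈ N.img a U, eSat N (N.img a U) u (bchain rest φ) := by
        rintro t ⟨u, hu, hr⟩
        exact hbox u hu (N.img a U, t) ⟨rfl, hr⟩
      refine ⟨(N.img a U, t₀), eRel_guardA.2 ⟨hdia, rfl, ht₀⟩, ?_⟩
      exact (ih (N.img a U) ⟨t₀, ht₀'⟩ t₀ ht₀').1 hall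
    · rintro ⟨d, hrel, hd⟩
      rw [eRel_guardA] at hrel
      obtain ⟨hK, h1, h2⟩ := hrel
      have hd2 : d.2 ∈ N.img a U := ⟨s, hs, h2⟩
      rw [h1] at hd
      have hall := (ih (N.img a U) ⟨d.2, hd2⟩ d.2 hd2).2 hd
      intro u hu
      refine (⟨?_, ?_⟩ : eSat N U u (EForm.and _ _))
      · intro c hc
        obtain ⟨hc1, hc2⟩ := (show c.1 = N.img a U ∧ N.R a u c.2 from hc)
        have := hall c.2 ⟨u, hu, hc2⟩
        rwa [← hc1] at this
      · obtain ⟨t, ht⟩ := hK u hu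
        exact sat_dia.2 ⟨(N.img a U, t), ⟨rfl, ht⟩, hall t ⟨u, hu, ht⟩⟩

end helpers
/-- For any finite sequence of action symbols a1,...,an (n ≥ 0) and
any EPDL formula φ, K⦗a1⦘⦗a2⦘···⦗an⦘φ ↔ ⟨?K⟨a1⟩⊤; a1; ...; ?K⟨an⟩⊤; an⟩Kφ is
valid on uncertainty maps (reading Kφ ↔ Kφ when n = 0). -/
theorem know_bchain_valid {P A : Type} [Countable P] [Countable A]
    (as : List A) (φ : EForm P A) :
    eValid (EForm.iff (EForm.know (bchain as φ)) (guardedDia as φ)) := by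
  intro N U hU s hs
  have h := main_iff (N := N) (φ := φ) as U hU s hs
  have hk : eSat N U s (EForm.know (bchain as φ)) ↔ eSat N U s (guardedDia as φ) := by
    rw [← h]; simp only [eSat]
  simp only [EForm.iff, EForm.imp, EForm.or, eSat]
  tauto
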